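/- Let λ, μ, ν be partitions with λ ⋖ μ, λ ⋖ ν, μ ≠ ν (each adding one box). Then ρ := sort(μ + ν − λ) = μ ∪ ν is a partition covering both μ and ν, and the square (λ, μ, ν, ρ) satisfies the affine local rule in both directions: ρ = sort(μ + ν − λ) and λ = sort(μ + ν − ρ). -/
import Mathlib


/-- The weakly decreasing rearrangement of an integer vector. -/
def sortDesc {m : ℕ} (v : Fin m → ℤ) : Fin m → ℤ :=
  fun i => - ((fun j => - v j) ∘ Tuple.sort (fun j => - v j)) i

theorem sortDesc_eq_self {m : ℕ} {v : Fin m → ℤ} (h : Antitone v) : sortDesc v = v := by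
  have hm : Monotone (fun j => -v j) := fun i j hij => neg_le_neg (h hij)
  funext i
  unfold sortDesc
  rw [Tuple.sort_eq_refl_iff_monotone.2 hm]
  simp

/-- Diamond in Young's lattice via the affine local rule: if μ ≠ ν both cover λ (each adding
one box, as weakly decreasing nonnegative integer vectors), then ρ := sort(μ + ν − λ) is the
componentwise maximum μ ∪ ν, it is a partition covering both μ and ν, and the square
satisfies the affine local rule in both directions: ρ = sort(μ + ν − λ), λ = sort(μ + ν − ρ). -/
theorem affine_local_rule_diamond (m : ℕ) (lam mu nu : Fin m → ℤ)
    (hlam : Antitone lam) (hlam0 : ∀ i, 0 ≤ lam i) (hmu : Antitone mu) (hnu : Antitone nu)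
    (hmucov : ∃ r, ∀ s, mu s = lam s + if s = r then 1 else 0)
    (hnucov : ∃ r, ∀ s, nu s = lam s + if s = r then 1 else 0)
    (hne : mu ≠ nu) :
    (∀ i, sortDesc (fun t => mu t + nu t - lam t) i = max (mu i) (nu i)) ∧
    Antitone (sortDesc fun t => mu t + nu t - lam t) ∧
    (∃ r, ∀ s, sortDesc (fun t => mu t + nu t - lam t) s = mu s + if s = r then 1 else 0) ∧
    (∃ r, ∀ s, sortDesc (fun t => mu t + nu t - lam t) s = nu s + if s = r then 1 else 0) ∧
    (∀ i, lam i =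
      sortDesc (fun t => mu t + nu t - sortDesc (fun u => mu u + nu u - lam u) t) i) := by
  obtain ⟨r, hr⟩ := hmucov
  obtain ⟨r', hr'⟩ := hnucov
  have hrr : r ≠ r' := by
    intro h
    apply hne
    funext s
    rw [hr, hr', h]
  have hf : (fun t => mu t + nu t - lam t) = fun t => max (mu t) (nu t) := by
    funext t
    rw [hr, hr']
    by_cases h1 : t = r <;> by_cases h2 : t = r' <;> simp_all <;> omega
  have hant : Antitone (fun t => mu t + nu t - lam t) := by
    rw [hf]
    exact fun i j hij => max_le_max (hmu hij) (hnu hij)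
  have hsort : sortDesc (fun t => mu t + nu t - lam t) = fun t => mu t + nu t - lam t :=
    sortDesc_eq_self hant
  refine ⟨?_, ?_, ?_, ?_, ?_⟩
  · intro i; rw [hsort, hf]
  · rw [hsort]; exact hant
  · exact ⟨r', fun s => by rw [hsort]; show mu s + nu s - lam s = _; rw [hr s, hr' s]; ring⟩
  · exact ⟨r, fun s => by rw [hsort]; show mu s + nu s - lam s = _; rw [hr s, hr' s]; ring⟩
  · intro i
    have : (fun t => mu t + nu t - sortDesc (fun u => mu u + nu u - lam u) t) = lam := by
      funext t
      rw [hsort]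
      ring
    rw [this, sortDesc_eq_self hlam]
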